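/- arXiv:1911.11278 — 2 statements merged into one kernel-verified Lean document; each statement's English description precedes it below -/
import Mathlib

section
/- Under the hypotheses of the previous proposition (with appropriate independence assumptions making X1 = S(Y1 XOR K) and X2 = S(Y2 XOR K) jointly well-defined), the mutual information I(X1; X2) is nonzero if and only if K = 0, given that S(Y1) XOR S(Y2) is non-uniform while for nonzero K the difference X1 XOR X2 is uniform and independent of X1. -/
/-- `BV m` models GF(2)^m: m-bit vectors, where `+` is bitwise XOR. -/
abbrev BV (m : ℕ) := Fin m → ZMod 2

/-- Shannon entropy (in bits) of a pmf on a finite type. -/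
noncomputable def H {α : Type*} [Fintype α] (p : α → ℝ) : ℝ :=
  -∑ a, p a * Real.logb 2 (p a)

/-- Mutual information I(X1;X2) = H(X1) + H(X2) - H(X1,X2) of a joint pmf. -/
noncomputable def MI {α β : Type*} [Fintype α] [Fintype β] (q : α × β → ℝ) : ℝ :=
  H (fun a => ∑ b, q (a, b)) + H (fun b => ∑ a, q (a, b)) - H q

lemma term_le' {x c : ℝ} (hx : 0 ≤ x) (hc : 0 < c) :
    x - c⁻¹ ≤ x * Real.log (x * c) := by
  rcases eq_or_lt_of_le hx with h | h
  · simp [← h]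
    positivity
  · have hxc : 0 < x * c := mul_pos h hc
    have h1 := Real.log_le_sub_one_of_pos (inv_pos.mpr hxc)
    rw [Real.log_inv] at h1
    have h2 : 1 - (x*c)⁻¹ ≤ Real.log (x*c) := by linarith
    have h3 := mul_le_mul_of_nonneg_left h2 hx
    calc x - c⁻¹ = x * (1 - (x*c)⁻¹) := by field_simp
    _ ≤ x * Real.log (x*c) := h3

lemma term_lt' {x c : ℝ} (hx : 0 ≤ x) (hc : 0 < c) (hne : x ≠ c⁻¹) :
    x - c⁻¹ < x * Real.log (x * c) := by
  rcases eq_or_lt_of_le hx with h | h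
  · rw [← h]; simp; positivity
  · have hxc : 0 < x * c := mul_pos h hc
    have hxc1 : x * c ≠ 1 := by
      intro habs
      exact hne (by field_simp at habs ⊢; linarith)
    have h1 := Real.log_lt_sub_one_of_pos (inv_pos.mpr hxc) (by
      simpa using (inv_eq_one (a := x*c)).not.mpr hxc1)
    rw [Real.log_inv] at h1
    have h2 : 1 - (x*c)⁻¹ < Real.log (x*c) := by linarith
    have h3 := mul_lt_mul_of_pos_left h2 h
    calc x - c⁻¹ = x * (1 - (x*c)⁻¹) := by field_simp
    _ < x * Real.log (x*c) := h3

lemma gibbs {α : Type*} [Fintype α] (p : α → ℝ) (h0 : ∀ a, 0 ≤ p a)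
    (h1 : ∑ a, p a = 1) (a0 : α) (hne : p a0 ≠ ((Fintype.card α : ℝ))⁻¹) :
    -Real.log (Fintype.card α) < ∑ a, p a * Real.log (p a) := by
  have hcard : 0 < Fintype.card α := Fintype.card_pos_iff.mpr ⟨a0⟩
  set c : ℝ := (Fintype.card α : ℝ) with hc0
  have hc : 0 < c := by rw [hc0]; exact_mod_cast hcard
  have key : ∑ a, (p a - c⁻¹) < ∑ a, p a * Real.log (p a * c) :=
    Finset.sum_lt_sum (fun a _ => term_le' (h0 a) hc)
      ⟨a0, Finset.mem_univ _, term_lt' (h0 a0) hc hne⟩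
  have hl : ∑ a, (p a - c⁻¹) = 0 := by
    rw [Finset.sum_sub_distrib, h1, Finset.sum_const]
    simp [hc0]
    field_simp
    norm_num
  have hr : ∑ a, p a * Real.log (p a * c)
      = ∑ a, p a * Real.log (p a) + Real.log c := by
    have : ∀ a, p a * Real.log (p a * c)
        = p a * Real.log (p a) + p a * Real.log c := by
      intro a
      rcases eq_or_lt_of_le (h0 a) with h | h
      · simp [← h]
      · rw [Real.log_mul h.ne' hc.ne', mul_add]
    rw [Finset.sum_congr rfl (fun a _ => this a), Finset.sum_add_distrib,
      ← Finset.sum_mul, h1, one_mul]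
  rw [hl, hr] at key
  linarith

lemma logb_split {x c : ℝ} (hx : 0 ≤ x) (hc : 0 < c) :
    x * Real.logb 2 (c * x) = x * Real.logb 2 c + x * Real.logb 2 x := by
  rcases eq_or_lt_of_le hx with h | h
  · simp [← h]
  · rw [Real.logb_mul hc.ne' h.ne', mul_add]

/-- For each key K let (X1, X2) = (S(Y1 ⊕ K), S(Y2 ⊕ K)) have
joint pmf `q K`, with X1 uniform and the difference D = X1 ⊕ X2 (pmf `pΔ K`)
independent of X1, i.e. `q K (x1, x2) = 2^{-m} * pΔ K (x1 + x2)`.  If the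
difference is non-uniform for K = 0 and uniform for every K ≠ 0, then the
mutual information I(X1; X2) is nonzero if and only if K = 0. -/
theorem stmt_13 (m : ℕ) (q : BV m → BV m × BV m → ℝ) (pΔ : BV m → BV m → ℝ)
    (hΔ0 : ∀ K d, 0 ≤ pΔ K d) (hΔ1 : ∀ K, ∑ d, pΔ K d = 1)
    (hjoint : ∀ K x1 x2, q K (x1, x2) = ((2 : ℝ) ^ m)⁻¹ * pΔ K (x1 + x2))
    (hbias0 : ¬ ∀ d, pΔ 0 d = ((2 : ℝ) ^ m)⁻¹)
    (hunif : ∀ K : BV m, K ≠ 0 → ∀ d, pΔ K d = ((2 : ℝ) ^ m)⁻¹) :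
    ∀ K : BV m, MI (q K) ≠ 0 ↔ K = 0 := by
  have hcard : (Fintype.card (BV m) : ℝ) = (2:ℝ)^m := by
    simp [BV]
  set c : ℝ := ((2:ℝ)^m)⁻¹ with hcdef
  have hc : (0:ℝ) < c := by positivity
  have hNc : (2:ℝ)^m * c = 1 := by
    rw [hcdef]; field_simp
  -- the main computation
  have MI_eq : ∀ K, MI (q K)
      = -Real.logb 2 c + ∑ d, pΔ K d * Real.logb 2 (pΔ K d) := by
    intro K
    have hsum1 : ∀ a : BV m, ∀ f : BV m → ℝ, ∑ b, f (a + b) = ∑ d, f d := by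
      intro a f
      exact Fintype.sum_equiv (Equiv.addLeft a) _ _ (fun b => rfl)
    have hsum2 : ∀ b : BV m, ∀ f : BV m → ℝ, ∑ a, f (a + b) = ∑ d, f d := by
      intro b f
      exact Fintype.sum_equiv (Equiv.addRight b) _ _ (fun a => rfl)
    have hm1 : ∀ a : BV m, (∑ b, q K (a, b)) = c := by
      intro a
      simp only [hjoint, ← Finset.mul_sum, ← hcdef]
      rw [hsum1 a (pΔ K), hΔ1, mul_one]
    have hm2 : ∀ b : BV m, (∑ a, q K (a, b)) = c := by
      intro b
      simp only [hjoint, ← Finset.mul_sum, ← hcdef]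
      rw [hsum2 b (pΔ K), hΔ1, mul_one]
    have hHc : ∀ p : BV m → ℝ, (∀ a, p a = c) → H p = -Real.logb 2 c := by
      intro p hp
      unfold H
      rw [Finset.sum_congr rfl (fun a _ => by rw [hp a]), Finset.sum_const]
      simp only [nsmul_eq_mul]
      rw [Finset.card_univ, hcard]
      rw [show (2:ℝ)^m * (c * Real.logb 2 c) = ((2:ℝ)^m * c) * Real.logb 2 c by ring,
        hNc, one_mul]
    have hT : ∑ d, pΔ K d * Real.logb 2 (c * pΔ K d)
        = Real.logb 2 c + ∑ d, pΔ K d * Real.logb 2 (pΔ K d) := by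
      rw [Finset.sum_congr rfl (fun d _ => logb_split (hΔ0 K d) hc),
        Finset.sum_add_distrib, ← Finset.sum_mul, hΔ1, one_mul]
    have hHq : H (q K) = -(Real.logb 2 c + ∑ d, pΔ K d * Real.logb 2 (pΔ K d)) := by
      unfold H
      rw [Fintype.sum_prod_type]
      have hin : ∀ a : BV m, ∑ b, q K (a, b) * Real.logb 2 (q K (a, b))
          = c * (Real.logb 2 c + ∑ d, pΔ K d * Real.logb 2 (pΔ K d)) := by
        intro a
        simp only [hjoint, ← hcdef]
        rw [hsum1 a (fun d => c * pΔ K d * Real.logb 2 (c * pΔ K d))]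
        rw [← hT, Finset.mul_sum]
        exact Finset.sum_congr rfl (fun d _ => by ring)
      rw [Finset.sum_congr rfl (fun a _ => hin a), Finset.sum_const]
      simp only [nsmul_eq_mul]
      rw [Finset.card_univ, hcard, ← mul_assoc, hNc, one_mul]
    unfold MI
    rw [hHc _ hm1, hHc _ hm2, hHq]
    ring
  intro K
  by_cases hK : K = 0
  · subst hK
    simp only [iff_true]
    -- MI (q 0) > 0 via Gibbs
    push_neg at hbias0
    obtain ⟨d0, hd0⟩ := hbias0
    have hg := gibbs (pΔ 0) (hΔ0 0) (hΔ1 0) d0 (by rw [hcard]; exact hd0)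
    rw [hcard] at hg
    have hlog2 : (0:ℝ) < Real.log 2 := Real.log_pos (by norm_num)
    have hT : -Real.logb 2 ((2:ℝ)^m) < ∑ d, pΔ 0 d * Real.logb 2 (pΔ 0 d) := by
      have heq : ∑ d, pΔ 0 d * Real.logb 2 (pΔ 0 d)
          = (∑ d, pΔ 0 d * Real.log (pΔ 0 d)) / Real.log 2 := by
        rw [Finset.sum_div]
        exact Finset.sum_congr rfl (fun d _ => by rw [Real.logb]; ring)
      rw [heq, Real.logb, ← neg_div]
      gcongr
    have : 0 < MI (q 0) := by
      rw [MI_eq 0, hcdef, Real.logb_inv, neg_neg]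
      linarith
    exact this.ne'
  · simp only [hK, iff_false, not_not]
    rw [MI_eq K]
    have : ∑ d, pΔ K d * Real.logb 2 (pΔ K d)
        = Real.logb 2 c := by
      have he : ∀ d : BV m, pΔ K d * Real.logb 2 (pΔ K d) = c * Real.logb 2 c :=
        fun d => by rw [hunif K hK d]
      rw [Finset.sum_congr rfl (fun d _ => he d), Finset.sum_const]
      simp only [nsmul_eq_mul]
      rw [Finset.card_univ, hcard, ← mul_assoc, hNc, one_mul]
    rw [this]
    ring
end

section
/- In the Canright decomposition, for a nonzero X = (x_1, x_0) in GF(2^8) over GF(2^4), the quantity y^{-1} satisfies y^{-1} = nu * (x_0 + x_1)^2 + x_0 * x_1 in GF(2^4), where nu is the fixed norm/scaling constant of the extension; consequently y^{-1} is a polynomial function of the input coordinates and is nonzero iff X != 0. -/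
open Polynomial

/-- Canright tower-field decomposition.  GF(2^8) is built from
GF(2^4) (a field F with 16 elements) as E = F[t]/(t² + t + ν).  In the normal
basis {t, t^q} (with t^q = t + 1), a pair (x1, x0) represents the element
x1·t^q + x0·t = (x0 + x1)·t + x1 of E.  If X = (x1, x0) is nonzero and
y ∈ F is the intermediate value satisfying X⁻¹ = (x0·y, x1·y), then
y⁻¹ = ν·(x0 + x1)² + x0·x1; consequently this norm expression, as a polynomial
function of the coordinates, is nonzero iff the represented element is
nonzero. -/
theorem stmt_18 (F : Type*) [Field F] [Fintype F] (hF : Fintype.card F = 16)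
    (ν : F) (hirr : Fact (Irreducible (X ^ 2 + X + C ν)))
    (x1 x0 : F) (hX : (x1, x0) ≠ (0, 0)) (y : F)
    (hy : (AdjoinRoot.of (X ^ 2 + X + C ν) (x0 + x1) *
            AdjoinRoot.root (X ^ 2 + X + C ν) +
          AdjoinRoot.of (X ^ 2 + X + C ν) x1)⁻¹
        = AdjoinRoot.of (X ^ 2 + X + C ν) (x1 * y + x0 * y) *
            AdjoinRoot.root (X ^ 2 + X + C ν) +
          AdjoinRoot.of (X ^ 2 + X + C ν) (x0 * y)) :
    y⁻¹ = ν * (x0 + x1) ^ 2 + x0 * x1 ∧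
    (∀ a b : F, ν * (a + b) ^ 2 + a * b ≠ 0 ↔ (a, b) ≠ (0, 0)) := by
  set p : F[X] := X ^ 2 + X + C ν with hp
  -- characteristic 2
  have hch : (2 : F) = 0 := by
    have h16 : ((16 : ℕ) : F) = 0 := by
      have := FiniteField.cast_card_eq_zero F
      rwa [hF] at this
    have hdvd : ringChar F ∣ 16 := (ringChar.spec F 16).mp h16
    have hprime : (ringChar F).Prime := CharP.char_is_prime F (ringChar F)
    have h2 : ringChar F = 2 := by
      have hd : ringChar F ∣ 2 ^ 4 := by norm_num at hdvd ⊢; exact hdvd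
      exact (Nat.prime_dvd_prime_iff_eq hprime Nat.prime_two).mp (hprime.dvd_of_dvd_pow hd)
    have : ((2 : ℕ) : F) = 0 := (ringChar.spec F 2).mpr (h2 ▸ dvd_refl _)
    simpa using this
  have hdeg : p.degree = 2 := by rw [hp]; compute_degree!
  -- the degree-2 irreducible polynomial has no roots in F
  have hnoroot : ∀ e : F, p.eval e ≠ 0 := by
    intro e he
    obtain ⟨q, hq⟩ := (dvd_iff_isRoot.mpr he : (X - C e) ∣ p)
    rcases hirr.out.isUnit_or_isUnit hq with h | h
    · have := degree_eq_zero_of_isUnit h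
      rw [degree_X_sub_C] at this
      exact one_ne_zero this
    · have hq0 : q.degree = 0 := degree_eq_zero_of_isUnit h
      have : p.degree = 1 := by
        rw [hq, degree_mul, degree_X_sub_C, hq0]; rfl
      rw [hdeg] at this
      exact (by norm_num : (2 : WithBot ℕ) ≠ 1) this
  have hinj : Function.Injective (AdjoinRoot.of p) := (AdjoinRoot.of p).injective
  have hroot : AdjoinRoot.root p ^ 2 + AdjoinRoot.root p + AdjoinRoot.of p ν = 0 := by
    have h := AdjoinRoot.eval₂_root p
    show AdjoinRoot.root (X ^ 2 + X + C ν) ^ 2 + AdjoinRoot.root (X ^ 2 + X + C ν) +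
      AdjoinRoot.of (X ^ 2 + X + C ν) ν = 0
    simp only [hp, eval₂_add, eval₂_pow, eval₂_X, eval₂_C] at h
    exact h
  have h2E : (2 : AdjoinRoot p) = 0 := by
    calc (2 : AdjoinRoot p) = AdjoinRoot.of p (2 : F) := (map_ofNat _ 2).symm
    _ = 0 := by rw [hch, map_zero]
  -- linear independence of 1 and root
  have hli : ∀ c d : F, AdjoinRoot.of p c * AdjoinRoot.root p + AdjoinRoot.of p d = 0 →
      c = 0 ∧ d = 0 := by
    intro c d h
    by_cases hc : c = 0
    · subst hc
      simp only [map_zero, zero_mul, zero_add] at h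
      refine ⟨rfl, hinj ?_⟩
      rw [h, map_zero]
    · exfalso
      have hcE : AdjoinRoot.of p c ≠ 0 := fun h0 => hc (hinj (by rw [h0, map_zero]))
      have hr : AdjoinRoot.root p = AdjoinRoot.of p (-(d / c)) := by
        rw [map_neg, map_div₀]
        field_simp
        linear_combination h
      apply hnoroot (-(d / c))
      have : AdjoinRoot.of p ((-(d/c)) ^ 2 + (-(d/c)) + ν) = 0 := by
        rw [map_add, map_add, map_pow, ← hr]
        exact hroot
      have h0 : (-(d/c)) ^ 2 + (-(d/c)) + ν = 0 := hinj (by rw [this, map_zero])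
      rw [hp]
      simp only [eval_add, eval_pow, eval_X, eval_C]
      exact h0
  -- the norm identity
  have hmul : ∀ a b : F,
      (AdjoinRoot.of p (a + b) * AdjoinRoot.root p + AdjoinRoot.of p b) *
      (AdjoinRoot.of p (a + b) * AdjoinRoot.root p + AdjoinRoot.of p a) =
      AdjoinRoot.of p (ν * (a + b) ^ 2 + a * b) := by
    intro a b
    simp only [map_add, map_mul, map_pow]
    linear_combination (AdjoinRoot.of p a + AdjoinRoot.of p b) ^ 2 * hroot -
      AdjoinRoot.of p ν * (AdjoinRoot.of p a + AdjoinRoot.of p b) ^ 2 * h2E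
  -- key nonvanishing statement
  have key : ∀ a b : F, ν * (a + b) ^ 2 + a * b ≠ 0 ↔ (a, b) ≠ (0, 0) := by
    intro a b
    constructor
    · intro h hab
      rw [Prod.mk.injEq] at hab
      obtain ⟨rfl, rfl⟩ := hab
      simp at h
    · intro hab h
      have h0 : (AdjoinRoot.of p (a + b) * AdjoinRoot.root p + AdjoinRoot.of p b) *
          (AdjoinRoot.of p (a + b) * AdjoinRoot.root p + AdjoinRoot.of p a) = 0 := by
        rw [hmul a b, h, map_zero]
      rcases mul_eq_zero.mp h0 with h1 | h1
      · obtain ⟨hs, hb⟩ := hli _ _ h1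
        have ha : a = 0 := by linear_combination hs - hb
        exact hab (by rw [ha, hb])
      · obtain ⟨hs, ha⟩ := hli _ _ h1
        have hb : b = 0 := by linear_combination hs - ha
        exact hab (by rw [ha, hb])
  refine ⟨?_, key⟩
  -- main computation
  have hX' : (x0, x1) ≠ (0, 0) := by
    intro h
    obtain ⟨h0, h1⟩ := Prod.mk.injEq .. ▸ h
    exact hX (by rw [h0, h1])
  have hN : ν * (x0 + x1) ^ 2 + x0 * x1 ≠ 0 := (key x0 x1).mpr hX'
  set Z : AdjoinRoot p := AdjoinRoot.of p (x0 + x1) * AdjoinRoot.root p + AdjoinRoot.of p x1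
    with hZ
  set Z' : AdjoinRoot p := AdjoinRoot.of p (x0 + x1) * AdjoinRoot.root p + AdjoinRoot.of p x0
    with hZ'
  have hZZ' : Z * Z' = AdjoinRoot.of p (ν * (x0 + x1) ^ 2 + x0 * x1) := hmul x0 x1
  have hZne : Z ≠ 0 := by
    intro h0
    rw [h0, zero_mul] at hZZ'
    exact hN (hinj (by rw [← hZZ', map_zero]))
  have hyZ : Z⁻¹ = AdjoinRoot.of p y * Z' := by
    rw [hy, hZ']
    show AdjoinRoot.of p (x1 * y + x0 * y) * AdjoinRoot.root p + AdjoinRoot.of p (x0 * y) = _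
    rw [show x1 * y + x0 * y = (x0 + x1) * y by ring, show x0 * y = y * x0 by ring,
      map_mul, map_mul]
    ring
  have h1 : AdjoinRoot.of p (y * (ν * (x0 + x1) ^ 2 + x0 * x1)) = AdjoinRoot.of p 1 := by
    rw [map_mul, map_one, ← hZZ']
    calc AdjoinRoot.of p y * (Z * Z') = Z * (AdjoinRoot.of p y * Z') := by ring
    _ = Z * Z⁻¹ := by rw [hyZ]
    _ = 1 := mul_inv_cancel₀ hZne
  have hy1 : y * (ν * (x0 + x1) ^ 2 + x0 * x1) = 1 := hinj h1
  exact inv_eq_of_mul_eq_one_right hy1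
end
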